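/- Let T be a finite TD-unmixed balanced tree of height 3. Then there exists a vertex u of height 2 with deg_T(u) = 2. -/

import Mathlib

open scoped Classical

section GraphDefs

variable {V : Type} (G : SimpleGraph V)

/-- A leaf is a vertex of degree 1. -/
def IsLeafVx (v : V) : Prop := (G.neighborSet v).ncard = 1

/-- The height of a vertex: the minimum distance to a leaf in its connected
component (`0` if there is no leaf reachable from it, e.g. for isolated vertices). -/
noncomputable def heightVx (v : V) : ℕ :=
  sInf {n | ∃ l, IsLeafVx G l ∧ G.Reachable v l ∧ G.dist v l = n}

/-- The height of a graph: the maximum height of a vertex. -/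
noncomputable def heightGr : ℕ := sSup (Set.range (heightVx G))

/-- A graph is balanced if no two adjacent vertices have the same height. -/
def IsBalanced : Prop := ∀ u w, G.Adj u w → heightVx G u ≠ heightVx G w

/-- The open neighborhood of a set of vertices. -/
def nbhd (S : Set V) : Set V := {u | ∃ v ∈ S, G.Adj v u}

/-- A total dominating set: `N(S) = V`. -/
def IsTDSet (S : Set V) : Prop := nbhd G S = Set.univ

/-- A minimal total dominating set. -/
def IsMinTDSet (S : Set V) : Prop := IsTDSet G S ∧ ∀ S' ⊂ S, ¬ IsTDSet G S'

/-- A graph is TD-unmixed if all of its minimal total dominating sets have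
the same cardinality. -/
def TDUnmixed : Prop :=
  ∀ S₁ S₂ : Set V, IsMinTDSet G S₁ → IsMinTDSet G S₂ → S₁.ncard = S₂.ncard

/-- A forest is TD-unmixed if every connected component is TD-unmixed. -/
def ComponentwiseTDUnmixed : Prop :=
  ∀ c : G.ConnectedComponent, TDUnmixed (G.induce c.supp)

end GraphDefs

section Aux

open SimpleGraph
set_option linter.unusedSectionVars false

variable {V : Type} [Fintype V] {G : SimpleGraph V}

lemma isTDSet_iff {S : Set V} : IsTDSet G S ↔ ∀ v, ∃ s ∈ S, G.Adj s v := by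
  unfold IsTDSet nbhd
  rw [Set.eq_univ_iff_forall]
  constructor
  · intro h v; exact h v
  · intro h v; exact h v

def hset (G : SimpleGraph V) (v : V) : Set ℕ :=
  {n | ∃ l, IsLeafVx G l ∧ G.Reachable v l ∧ G.dist v l = n}

lemma heightVx_def (v : V) : heightVx G v = sInf (hset G v) := rfl

lemma height_le_forall_leaf {v l : V} (hl : IsLeafVx G l) (hr : G.Reachable v l) :
    heightVx G v ≤ G.dist v l :=
  Nat.sInf_le ⟨l, hl, hr, rfl⟩

lemma exists_leaf_dist {v : V} (hne : (hset G v).Nonempty) :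
    ∃ l, IsLeafVx G l ∧ G.Reachable v l ∧ G.dist v l = heightVx G v :=
  Nat.sInf_mem hne

lemma height_le_max (hht : heightGr G = 3) (v : V) : heightVx G v ≤ 3 := by
  have h1 : heightVx G v ≤ heightGr G :=
    le_csSup ((Set.finite_range _).bddAbove) (Set.mem_range_self v)
  omega

lemma exists_height_three (hht : heightGr G = 3) : ∃ c, heightVx G c = 3 := by
  by_cases hV : Nonempty V
  · have h3 : 3 ∈ Set.range (heightVx G) := by
      rw [← hht]
      exact Nat.sSup_mem (Set.range_nonempty _) ((Set.finite_range _).bddAbove)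
    exact h3
  · exfalso
    rw [not_nonempty_iff] at hV
    have : Set.range (heightVx G) = ∅ := Set.range_eq_empty _
    unfold heightGr at hht
    rw [this] at hht
    simp at hht

lemma hset_nonempty (hconn : G.Connected) (hht : heightGr G = 3) (v : V) :
    (hset G v).Nonempty := by
  obtain ⟨c, hc⟩ := exists_height_three hht
  have hcne : (hset G c).Nonempty := by
    by_contra h
    rw [Set.not_nonempty_iff_eq_empty] at h
    have : heightVx G c = 0 := by
      rw [heightVx_def, h, Nat.sInf_empty]
    omega
  obtain ⟨l, hl, _, _⟩ := exists_leaf_dist hcne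
  exact ⟨G.dist v l, l, hl, hconn.preconnected v l, rfl⟩

lemma height_adj_le (hconn : G.Connected) (hht : heightGr G = 3) {u w : V} (h : G.Adj u w) :
    heightVx G u ≤ heightVx G w + 1 := by
  obtain ⟨l, hl, hr, hd⟩ := exists_leaf_dist (hset_nonempty hconn hht w)
  have h1 : G.dist u l ≤ G.dist u w + G.dist w l := hconn.dist_triangle
  have h2 : G.dist u w = 1 := dist_eq_one_iff_adj.mpr h
  have h3 : heightVx G u ≤ G.dist u l := height_le_forall_leaf hl (hconn.preconnected u l)
  omega

lemma height_adj (hconn : G.Connected) (hht : heightGr G = 3) (hbal : IsBalanced G)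
    {u w : V} (h : G.Adj u w) :
    heightVx G u = heightVx G w + 1 ∨ heightVx G w = heightVx G u + 1 := by
  have h1 := height_adj_le hconn hht h
  have h2 := height_adj_le hconn hht h.symm
  have h3 := hbal u w h
  omega

lemma height_zero_iff (hconn : G.Connected) (hht : heightGr G = 3) (v : V) :
    heightVx G v = 0 ↔ IsLeafVx G v := by
  constructor
  · intro h0
    obtain ⟨l, hl, hr, hd⟩ := exists_leaf_dist (hset_nonempty hconn hht v)
    rw [h0] at hd
    have : v = l := (hconn.dist_eq_zero_iff).mp hd
    rwa [this]
  · intro hv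
    have h0 : (0 : ℕ) ∈ hset G v := ⟨v, hv, Reachable.refl v, by simp⟩
    have h1 : heightVx G v ≤ 0 := Nat.sInf_le h0
    omega

lemma exists_nbr_height (hconn : G.Connected) (hht : heightGr G = 3) {v : V} {k : ℕ}
    (hv : heightVx G v = k + 1) : ∃ u, G.Adj v u ∧ heightVx G u = k := by
  obtain ⟨l, hl, hr, hd⟩ := exists_leaf_dist (hset_nonempty hconn hht v)
  rw [hv] at hd
  obtain ⟨p, hp, hlen⟩ := hr.exists_path_of_dist
  match p, hlen with
  | SimpleGraph.Walk.nil, hlen => simp at hd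
  | SimpleGraph.Walk.cons (v := u) hadj q, hlen =>
    refine ⟨u, hadj, ?_⟩
    rw [Walk.length_cons, hd] at hlen
    have hql : q.length = k := by omega
    have h1 : G.dist u l ≤ k := by
      have := dist_le q
      omega
    have h2 : heightVx G u ≤ k := le_trans (height_le_forall_leaf hl q.reachable) h1
    have h3 : heightVx G v ≤ heightVx G u + 1 := height_adj_le hconn hht hadj
    omega

lemma leaf_unique_nbr {l : V} (hl : IsLeafVx G l) : ∃ a, G.neighborSet l = {a} :=
  Set.ncard_eq_one.mp hl

end Aux
section Tree

open SimpleGraph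
set_option linter.unusedSectionVars false

variable {V : Type} [Fintype V] {G : SimpleGraph V}

lemma dist_prefix {r x y : V} (p : G.Walk r y) (hp : x ∈ p.support) :
    G.dist r x ≤ (p.takeUntil x hp).length := dist_le _

lemma take_drop_len {r x y : V} (p : G.Walk r y) (hp : x ∈ p.support) :
    (p.takeUntil x hp).length + (p.dropUntil x hp).length = p.length := by
  have := congrArg Walk.length (p.take_spec hp)
  rwa [Walk.length_append] at this

/-- In a tree, two adjacent vertices cannot be equidistant from a third vertex. -/
lemma no_equidist (ht : G.IsTree) {r u v : V} (hadj : G.Adj u v)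
    (heq : G.dist r u = G.dist r v) : False := by
  have hconn := ht.1
  obtain ⟨p, hp, hlen⟩ := (hconn.preconnected r u).exists_path_of_dist
  obtain ⟨q, hq, hqlen⟩ := (hconn.preconnected r v).exists_path_of_dist
  by_cases hv : v ∈ p.support
  · have h1 := dist_prefix p hv
    have h2 : G.dist v u ≤ (p.dropUntil v hv).length := dist_le _
    have h3 := take_drop_len p hv
    have h4 : 0 < G.dist v u := hconn.pos_dist_of_ne hadj.ne'
    omega
  · set P1 : G.Walk v r := Walk.cons hadj.symm p.reverse with hP1def
    have hP1 : P1.IsPath := by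
      rw [hP1def, Walk.cons_isPath_iff]
      refine ⟨hp.reverse, ?_⟩
      rw [Walk.support_reverse]
      simpa using hv
    have hP2 : q.reverse.IsPath := hq.reverse
    have hnePQ : P1 ≠ q.reverse := by
      intro h
      have := congrArg Walk.length h
      rw [hP1def, Walk.length_cons, Walk.length_reverse, Walk.length_reverse, hlen, hqlen, heq]
        at this
      omega
    exact hnePQ (congrArg Subtype.val (ht.2.path_unique ⟨P1, hP1⟩ ⟨q.reverse, hP2⟩))

/-- In a tree, a vertex cannot have two distinct neighbors strictly closer to `r`. -/
lemma unique_closer (ht : G.IsTree) {r v u₁ u₂ : V} (h₁ : G.Adj v u₁) (h₂ : G.Adj v u₂)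
    (hne : u₁ ≠ u₂) (hd₁ : G.dist r u₁ + 1 = G.dist r v) (hd₂ : G.dist r u₂ + 1 = G.dist r v) :
    False := by
  have hconn := ht.1
  obtain ⟨p₁, hp₁, hlen₁⟩ := (hconn.preconnected r u₁).exists_path_of_dist
  obtain ⟨p₂, hp₂, hlen₂⟩ := (hconn.preconnected r u₂).exists_path_of_dist
  have hu21 : u₂ ∉ p₁.support := by
    intro hmem
    have ha := dist_prefix p₁ hmem
    have hb : G.dist u₂ u₁ ≤ (p₁.dropUntil u₂ hmem).length := dist_le _
    have hc := take_drop_len p₁ hmem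
    have hd : 0 < G.dist u₂ u₁ := hconn.pos_dist_of_ne (Ne.symm hne)
    omega
  have hvp : ∀ (w : V) (p : G.Walk r w), p.length + 1 = G.dist r v → v ∉ p.support := by
    intro w p hpl hmem
    have := dist_prefix p hmem
    have h2 : (p.takeUntil v hmem).length ≤ p.length := Walk.length_takeUntil_le _ _
    omega
  set P1 : G.Walk v r := Walk.cons h₁ p₁.reverse with hP1def
  set P2 : G.Walk v r := Walk.cons h₂ p₂.reverse with hP2def
  have hP1 : P1.IsPath := by
    rw [hP1def, Walk.cons_isPath_iff]
    refine ⟨hp₁.reverse, ?_⟩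
    rw [Walk.support_reverse]
    have := hvp u₁ p₁ (by omega)
    simpa using this
  have hP2 : P2.IsPath := by
    rw [hP2def, Walk.cons_isPath_iff]
    refine ⟨hp₂.reverse, ?_⟩
    rw [Walk.support_reverse]
    have := hvp u₂ p₂ (by omega)
    simpa using this
  have hne12 : P1 ≠ P2 := by
    intro h
    have hsup := congrArg Walk.support h
    rw [hP1def, hP2def, Walk.support_cons, Walk.support_cons] at hsup
    have hu2mem : u₂ ∈ p₂.reverse.support := by
      rw [Walk.support_reverse]
      simpa using Walk.start_mem_support p₂
    have : u₂ ∈ p₁.reverse.support := by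
      have : u₂ ∈ v :: p₁.reverse.support := by
        rw [hsup]; exact List.mem_cons_of_mem _ hu2mem
      rcases List.mem_cons.mp this with h' | h'
      · exact absurd h'.symm h₂.ne
      · exact h'
    rw [Walk.support_reverse] at this
    exact hu21 (by simpa using this)
  exact hne12 (congrArg Subtype.val (ht.2.path_unique ⟨P1, hP1⟩ ⟨P2, hP2⟩))

/-- In a tree, two vertices cannot have two distinct common neighbors. -/
lemma common_nbr_unique (ht : G.IsTree) {x y z z' : V} (hxy : x ≠ y) (hzz : z ≠ z')
    (h1 : G.Adj x z) (h2 : G.Adj z y) (h3 : G.Adj x z') (h4 : G.Adj z' y) : False := by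
  set P1 : G.Walk x y := Walk.cons h1 (Walk.cons h2 Walk.nil) with hP1def
  set P2 : G.Walk x y := Walk.cons h3 (Walk.cons h4 Walk.nil) with hP2def
  have hP1 : P1.IsPath := by
    rw [hP1def, Walk.cons_isPath_iff, Walk.cons_isPath_iff]
    refine ⟨⟨Walk.IsPath.nil, by simp [h2.ne]⟩, ?_⟩
    simp only [Walk.support_cons, Walk.support_nil, List.mem_cons, List.mem_singleton]
    push_neg
    exact ⟨h1.ne, hxy, by simp⟩
  have hP2 : P2.IsPath := by
    rw [hP2def, Walk.cons_isPath_iff, Walk.cons_isPath_iff]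
    refine ⟨⟨Walk.IsPath.nil, by simp [h4.ne]⟩, ?_⟩
    simp only [Walk.support_cons, Walk.support_nil, List.mem_cons, List.mem_singleton]
    push_neg
    exact ⟨h3.ne, hxy, by simp⟩
  have : P1 ≠ P2 := by
    intro h
    have := congrArg Walk.support h
    rw [hP1def, hP2def] at this
    simp only [Walk.support_cons, Walk.support_nil] at this
    simp only [List.cons.injEq] at this
    exact hzz this.2.1
  exact this (congrArg Subtype.val (ht.2.path_unique ⟨P1, hP1⟩ ⟨P2, hP2⟩))

/-- No 6-cycle: path x-c-y of length 2 and path x-a₁-b₁-a₂-y of length 4. -/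
lemma no_six_cycle (ht : G.IsTree) {x y c a₁ b₁ a₂ : V}
    (hxy : x ≠ y) (ha : a₁ ≠ a₂) (hxb : x ≠ b₁) (hyb : y ≠ b₁) (hxa2 : x ≠ a₂) (hya1 : y ≠ a₁)
    (e1 : G.Adj x c) (e2 : G.Adj c y) (e3 : G.Adj x a₁) (e4 : G.Adj a₁ b₁)
    (e5 : G.Adj b₁ a₂) (e6 : G.Adj a₂ y) (hca1 : c ≠ a₁) (hcb : c ≠ b₁) (hca2 : c ≠ a₂) :
    False := by
  set P1 : G.Walk x y := Walk.cons e1 (Walk.cons e2 Walk.nil) with hP1def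
  set P2 : G.Walk x y := Walk.cons e3 (Walk.cons e4 (Walk.cons e5 (Walk.cons e6 Walk.nil)))
    with hP2def
  have hP1 : P1.IsPath := by
    rw [hP1def, Walk.cons_isPath_iff, Walk.cons_isPath_iff]
    refine ⟨⟨Walk.IsPath.nil, by simp [e2.ne]⟩, ?_⟩
    simp only [Walk.support_cons, Walk.support_nil, List.mem_cons, List.mem_singleton]
    push_neg
    exact ⟨e1.ne, hxy, by simp⟩
  have hP2 : P2.IsPath := by
    rw [Walk.isPath_def, hP2def]
    simp only [Walk.support_cons, Walk.support_nil, List.nodup_cons, List.mem_cons,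
      List.mem_singleton, List.not_mem_nil, not_false_iff, and_true, List.nodup_nil]
    push_neg
    exact ⟨⟨e3.ne, hxb, hxa2, hxy, by simp⟩, ⟨e4.ne, ha, fun h => hya1 h.symm, by simp⟩,
      ⟨e5.ne, fun h => hyb h.symm, by simp⟩, e6.ne, by simp⟩
  have hne12 : P1 ≠ P2 := by
    intro h
    have := congrArg Walk.length h
    rw [hP1def, hP2def] at this
    simp only [Walk.length_cons, Walk.length_nil] at this
    omega
  exact hne12 (congrArg Subtype.val (ht.2.path_unique ⟨P1, hP1⟩ ⟨P2, hP2⟩))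

end Tree
section Main

open SimpleGraph
set_option linter.unusedSectionVars false
set_option maxHeartbeats 1000000

variable {V : Type} [Fintype V] {G : SimpleGraph V}

lemma exists_min_td_subset : ∀ (n : ℕ) (S : Set V), S.ncard ≤ n → IsTDSet G S →
    ∃ M, M ⊆ S ∧ IsMinTDSet G M := by
  intro n
  induction n with
  | zero =>
    intro S hc hTD
    refine ⟨S, subset_rfl, hTD, ?_⟩
    intro S' hss _
    have := Set.ncard_lt_ncard hss (Set.toFinite S)
    omega
  | succ n ih =>
    intro S hc hTD
    by_cases hmin : ∀ S' ⊂ S, ¬ IsTDSet G S'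
    · exact ⟨S, subset_rfl, hTD, hmin⟩
    · push_neg at hmin
      obtain ⟨S', hss, hTD'⟩ := hmin
      have hlt := Set.ncard_lt_ncard hss (Set.toFinite S)
      obtain ⟨M, hM, hMin⟩ := ih S' (by omega) hTD'
      exact ⟨M, hM.trans hss.subset, hMin⟩

/-- **Theorem**: a finite TD-unmixed balanced tree of height 3 has a vertex of
height 2 and degree 2. -/
theorem exists_height_two_degree_two {V : Type} [Fintype V] (G : SimpleGraph V)
    (htree : G.IsTree) (hbal : IsBalanced G) (hunm : TDUnmixed G)
    (hht : heightGr G = 3) :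
    ∃ u : V, heightVx G u = 2 ∧ (G.neighborSet u).ncard = 2 := by
  classical
  by_contra hcon
  push_neg at hcon
  have hconn : G.Connected := htree.1
  have hle3 : ∀ v, heightVx G v ≤ 3 := height_le_max hht
  have hadj2 : ∀ {u w}, G.Adj u w →
      heightVx G u = heightVx G w + 1 ∨ heightVx G w = heightVx G u + 1 :=
    fun hu => height_adj hconn hht hbal hu
  have hzero : ∀ v, heightVx G v = 0 ↔ IsLeafVx G v := height_zero_iff hconn hht
  have hnbr : ∀ {v k}, heightVx G v = k + 1 → ∃ u, G.Adj v u ∧ heightVx G u = k :=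
    fun hv => exists_nbr_height hconn hht hv
  have hne_h : ∀ {p q : V}, heightVx G p ≠ heightVx G q → p ≠ q :=
    fun hpq he => hpq (congrArg _ he)
  -- degree of height-2 vertices is ≥ 3
  have deg3 : ∀ b, heightVx G b = 2 → 3 ≤ (G.neighborSet b).ncard := by
    intro b hb
    obtain ⟨u, hu, _⟩ := hnbr (show heightVx G b = 1 + 1 by omega)
    have h1 : 0 < (G.neighborSet b).ncard :=
      (Set.ncard_pos (Set.toFinite _)).mpr ⟨u, hu⟩
    have h2 : (G.neighborSet b).ncard ≠ 1 := by
      intro hc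
      have : heightVx G b = 0 := (hzero b).mpr hc
      omega
    have h3 := hcon b hb
    omega
  -- height-3 vertices have two distinct height-2 neighbors
  have hCnbrs : ∀ c, heightVx G c = 3 → ∃ z z', z ≠ z' ∧ G.Adj c z ∧ G.Adj c z' ∧
      heightVx G z = 2 ∧ heightVx G z' = 2 := by
    intro c hc
    have hnb2 : ∀ w, G.Adj c w → heightVx G w = 2 := by
      intro w hw
      have := hadj2 hw
      have := hle3 w
      omega
    obtain ⟨u, hu, _⟩ := hnbr (show heightVx G c = 2 + 1 by omega)
    have h1 : 0 < (G.neighborSet c).ncard :=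
      (Set.ncard_pos (Set.toFinite _)).mpr ⟨u, hu⟩
    have h2 : (G.neighborSet c).ncard ≠ 1 := by
      intro hone
      have : heightVx G c = 0 := (hzero c).mpr hone
      omega
    have h3 : 1 < (G.neighborSet c).ncard := by omega
    obtain ⟨z, hz, z', hz', hzz⟩ := (Set.one_lt_ncard (Set.toFinite _)).mp h3
    exact ⟨z, z', hzz, hz, hz', hnb2 z hz, hnb2 z' hz'⟩
  -- there is a height-2 vertex with two height-1 neighbors
  have hb1 : ∃ b₁ a₁ a₂, heightVx G b₁ = 2 ∧ G.Adj b₁ a₁ ∧ G.Adj b₁ a₂ ∧ a₁ ≠ a₂ ∧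
      heightVx G a₁ = 1 ∧ heightVx G a₂ = 1 := by
    by_contra hno
    push_neg at hno
    -- every height-2 vertex has two distinct height-3 neighbors
    have hBC : ∀ b, heightVx G b = 2 → ∃ z z', z ≠ z' ∧ G.Adj b z ∧ G.Adj b z' ∧
        heightVx G z = 3 ∧ heightVx G z' = 3 := by
      intro b hb
      have hsub : G.neighborSet b ⊆
          (G.neighborSet b ∩ {x | heightVx G x = 1}) ∪
          (G.neighborSet b ∩ {x | heightVx G x = 3}) := by
        intro w hw
        have := hadj2 hw
        have := hle3 w
        have hw13 : heightVx G w = 1 ∨ heightVx G w = 3 := by omega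
        rcases hw13 with h | h
        · exact Or.inl ⟨hw, h⟩
        · exact Or.inr ⟨hw, h⟩
      have hN1 : (G.neighborSet b ∩ {x | heightVx G x = 1}).ncard ≤ 1 := by
        rw [Set.ncard_le_one (Set.toFinite _)]
        intro a ha a' ha'
        by_contra hne
        exact hno b a a' hb ha.1 ha'.1 hne ha.2 ha'.2
      have hcard := deg3 b hb
      have hle := Set.ncard_le_ncard hsub (Set.toFinite _)
      have hun := Set.ncard_union_le (G.neighborSet b ∩ {x | heightVx G x = 1})
        (G.neighborSet b ∩ {x | heightVx G x = 3})
      have h3 : 1 < (G.neighborSet b ∩ {x | heightVx G x = 3}).ncard := by omega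
      obtain ⟨z, hz, z', hz', hzz⟩ := (Set.one_lt_ncard (Set.toFinite _)).mp h3
      exact ⟨z, z', hzz, hz.1, hz'.1, hz.2, hz'.2⟩
    -- maximal distance argument
    obtain ⟨c₀, hc₀⟩ := exists_height_three hht
    have hDne : ({v | heightVx G v = 2 ∨ heightVx G v = 3} : Set V).Nonempty :=
      ⟨c₀, Or.inr hc₀⟩
    obtain ⟨vS, hvS, hmax⟩ := Set.exists_max_image {v | heightVx G v = 2 ∨ heightVx G v = 3}
      (G.dist c₀) (Set.toFinite _) hDne
    have hkey : ∃ u₁ u₂, u₁ ≠ u₂ ∧ G.Adj vS u₁ ∧ G.Adj vS u₂ ∧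
        (heightVx G u₁ = 2 ∨ heightVx G u₁ = 3) ∧
        (heightVx G u₂ = 2 ∨ heightVx G u₂ = 3) := by
      rcases hvS with h2 | h3
      · obtain ⟨z, z', hzz, hz, hz', hh, hh'⟩ := hBC vS h2
        exact ⟨z, z', hzz, hz, hz', Or.inr hh, Or.inr hh'⟩
      · obtain ⟨z, z', hzz, hz, hz', hh, hh'⟩ := hCnbrs vS h3
        exact ⟨z, z', hzz, hz, hz', Or.inl hh, Or.inl hh'⟩
    obtain ⟨u₁, u₂, hne12, hadj1, hadj2', hu1D, hu2D⟩ := hkey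
    have hstep : ∀ u, G.Adj vS u → (heightVx G u = 2 ∨ heightVx G u = 3) →
        G.dist c₀ u + 1 = G.dist c₀ vS := by
      intro u hadju hD
      have hle : G.dist c₀ u ≤ G.dist c₀ vS := hmax u hD
      have hne' : G.dist c₀ u ≠ G.dist c₀ vS :=
        fun he => no_equidist htree hadju.symm he
      have htri : G.dist c₀ vS ≤ G.dist c₀ u + G.dist u vS := hconn.dist_triangle
      have h1 : G.dist u vS = 1 := dist_eq_one_iff_adj.mpr hadju.symm
      omega
    exact unique_closer htree hadj1 hadj2' hne12
      (hstep u₁ hadj1 hu1D) (hstep u₂ hadj2' hu2D)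
  obtain ⟨b₁, a₁, a₂, hb₁2, hba₁, hba₂, ha12, ha₁1, ha₂1⟩ := hb1
  -- choice of a good covering neighbor for each height-3 vertex
  have hsig : ∀ c, heightVx G c = 3 → ∃ z, G.Adj c z ∧ ¬ G.Adj a₁ z ∧ ¬ G.Adj a₂ z := by
    intro c hc
    obtain ⟨z, z', hzz, hcz, hcz', hz2, hz2'⟩ := hCnbrs c hc
    by_cases h1 : ¬ G.Adj a₁ z ∧ ¬ G.Adj a₂ z
    · exact ⟨z, hcz, h1.1, h1.2⟩
    by_cases h2 : ¬ G.Adj a₁ z' ∧ ¬ G.Adj a₂ z'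
    · exact ⟨z', hcz', h2.1, h2.2⟩
    exfalso
    rw [not_and_or, not_not, not_not] at h1 h2
    have hca1 : c ≠ a₁ := hne_h (by omega)
    have hca2 : c ≠ a₂ := hne_h (by omega)
    rcases h1 with hz1 | hz2c <;> rcases h2 with hz1' | hz2c'
    · exact common_nbr_unique htree hca1 hzz hcz hz1.symm hcz' hz1'.symm
    · by_cases hzb : z = b₁
      · have hz'b : z' ≠ b₁ := fun h => hzz (hzb.trans h.symm)
        exact common_nbr_unique htree hca2 hz'b hcz' hz2c'.symm (hzb ▸ hcz) hba₂
      · by_cases hzb' : z' = b₁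
        · exact common_nbr_unique htree hca1 hzb hcz hz1.symm (hzb' ▸ hcz') hba₁
        · exact no_six_cycle htree hzz ha12 hzb hzb' (hne_h (by omega)) (hne_h (by omega))
            hcz.symm hcz' hz1.symm hba₁.symm hba₂ hz2c' hca1 (hne_h (by omega)) hca2
    · by_cases hzb' : z' = b₁
      · have hzb2 : z ≠ b₁ := fun h => hzz (h.trans hzb'.symm)
        exact common_nbr_unique htree hca2 hzb2 hcz hz2c.symm (hzb' ▸ hcz') hba₂
      · by_cases hzb : z = b₁
        · exact common_nbr_unique htree hca1 hzb' hcz' hz1'.symm (hzb ▸ hcz) hba₁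
        · exact no_six_cycle htree hzz.symm ha12 hzb' hzb (hne_h (by omega)) (hne_h (by omega))
            hcz'.symm hcz hz1'.symm hba₁.symm hba₂ hz2c hca1 (hne_h (by omega)) hca2
    · exact common_nbr_unique htree hca2 hzz hcz hz2c.symm hcz' hz2c'.symm
  -- choose covering elements avoiding N(a₁) ∪ N(a₂)
  choose σ hσadj hσ1 hσ2 using hsig
  set R : Set V := {z | ∃ c, ∃ hc : heightVx G c = 3, z = σ c hc} with hRdef
  have hRa : ∀ z ∈ R, ¬ G.Adj a₁ z ∧ ¬ G.Adj a₂ z := by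
    rintro z ⟨c, hc, rfl⟩
    exact ⟨hσ1 c hc, hσ2 c hc⟩
  have hR2 : ∀ z ∈ R, heightVx G z = 2 := by
    rintro z ⟨c, hc, rfl⟩
    have h1 := hadj2 (hσadj c hc)
    have h2 := hle3 (σ c hc)
    omega
  -- minimum cardinality cover
  set Cov : Set V → Prop := fun Y => Y ⊆ R ∧ ∀ c, heightVx G c = 3 → ∃ z ∈ Y, G.Adj c z
    with hCovdef
  have hCovR : Cov R := ⟨subset_rfl, fun c hc => ⟨σ c hc, ⟨c, hc, rfl⟩, hσadj c hc⟩⟩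
  have hnsne : {n | ∃ Y, Cov Y ∧ Y.ncard = n}.Nonempty := ⟨R.ncard, R, hCovR, rfl⟩
  obtain ⟨Y₀, hY₀Cov, hY₀card⟩ := Nat.sInf_mem hnsne
  have hminY : ∀ Y, Cov Y → Y₀.ncard ≤ Y.ncard := by
    intro Y hY
    rw [hY₀card]
    exact Nat.sInf_le ⟨Y, hY, rfl⟩
  have hY₀2 : ∀ y ∈ Y₀, heightVx G y = 2 := fun y hy => hR2 y (hY₀Cov.1 hy)
  -- each element of Y₀ privately covers some height-3 vertex
  have hpriv : ∀ y ∈ Y₀, ∃ c, heightVx G c = 3 ∧ G.Adj c y ∧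
      ∀ z ∈ Y₀, G.Adj c z → z = y := by
    intro y hy
    by_contra hnp
    push_neg at hnp
    have hCov' : Cov (Y₀ \ {y}) := by
      refine ⟨Set.diff_subset.trans hY₀Cov.1, ?_⟩
      intro c hc
      obtain ⟨z, hzY, hcz⟩ := hY₀Cov.2 c hc
      by_cases hzy : z = y
      · obtain ⟨z', hz'Y, hcz', hz'y⟩ := hnp c hc (hzy ▸ hcz)
        exact ⟨z', ⟨hz'Y, hz'y⟩, hcz'⟩
      · exact ⟨z, ⟨hzY, hzy⟩, hcz⟩
    have hlt := Set.ncard_diff_singleton_lt_of_mem hy (Set.toFinite Y₀)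
    have := hminY _ hCov'
    omega
  -- leaf selector
  have hFex : ∀ a : V, ∃ l, heightVx G a = 1 → (G.Adj a l ∧ heightVx G l = 0) := by
    intro a
    by_cases ha : heightVx G a = 1
    · obtain ⟨l, hl, hl0⟩ := hnbr (show heightVx G a = 0 + 1 by omega)
      exact ⟨l, fun _ => ⟨hl, hl0⟩⟩
    · exact ⟨a, fun h => absurd h ha⟩
  choose F hF using hFex
  set W : Set V := {a | heightVx G a = 1 ∧ ∀ y ∈ Y₀, ¬ G.Adj y a} with hWdef
  set S : Set V := {v | heightVx G v = 1} ∪ Y₀ ∪ F '' W with hSdef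
  have hΛ0 : ∀ l ∈ F '' W, heightVx G l = 0 := by
    rintro l ⟨a, haW, rfl⟩
    exact (hF a haW.1).2
  -- leaves have a unique neighbor
  have hleafnbr : ∀ l w, heightVx G l = 0 → G.Adj l w → ∀ s, G.Adj s l → s = w := by
    intro l w hl0 hlw s hsl
    obtain ⟨x, hx⟩ := leaf_unique_nbr ((hzero l).mp hl0)
    have h1 : w ∈ G.neighborSet l := hlw
    have h2 : s ∈ G.neighborSet l := hsl.symm
    rw [hx, Set.mem_singleton_iff] at h1 h2
    rw [h2, h1]
  -- S is a total dominating set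
  have hS_TD : IsTDSet G S := by
    rw [isTDSet_iff]
    intro v
    have hv3 := hle3 v
    have hcases : heightVx G v = 0 ∨ heightVx G v = 1 ∨ heightVx G v = 2 ∨
        heightVx G v = 3 := by omega
    rcases hcases with h0 | h1 | h2 | h3
    · obtain ⟨u, hu⟩ := leaf_unique_nbr ((hzero v).mp h0)
      have huv : G.Adj v u := by
        have : u ∈ G.neighborSet v := by rw [hu]; rfl
        exact this
      have hu1 : heightVx G u = 1 := by
        have := hadj2 huv
        omega
      exact ⟨u, Or.inl (Or.inl hu1), huv.symm⟩
    · by_cases hcov : ∃ y ∈ Y₀, G.Adj y v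
      · obtain ⟨y, hyY, hyv⟩ := hcov
        exact ⟨y, Or.inl (Or.inr hyY), hyv⟩
      · push_neg at hcov
        have hvW : v ∈ W := ⟨h1, hcov⟩
        exact ⟨F v, Or.inr ⟨v, hvW, rfl⟩, (hF v h1).1.symm⟩
    · obtain ⟨u, hvu, hu1⟩ := hnbr (show heightVx G v = 1 + 1 by omega)
      exact ⟨u, Or.inl (Or.inl hu1), hvu.symm⟩
    · obtain ⟨z, hzY, hvz⟩ := hY₀Cov.2 v h3
      exact ⟨z, Or.inl (Or.inr hzY), hvz.symm⟩
  -- every element of S is necessary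
  have hS_key : ∀ v ∈ S, ∃ x, ∀ s ∈ S, G.Adj s x → s = v := by
    intro v hvS
    rcases hvS with (hv1 | hvY) | hvΛ
    · have hv1' : heightVx G v = 1 := hv1
      exact ⟨F v, fun s _ hsx =>
        hleafnbr (F v) v (hF v hv1').2 (hF v hv1').1.symm s hsx⟩
    · obtain ⟨c, hc3, hcv, hcpriv⟩ := hpriv v hvY
      refine ⟨c, ?_⟩
      intro s hsS hsc
      have hs2 : heightVx G s = 2 := by
        have := hadj2 hsc
        have := hle3 s
        omega
      rcases hsS with (hs1 | hsY) | hsΛ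
      · have : heightVx G s = 1 := hs1
        omega
      · exact hcpriv s hsY hsc.symm
      · have := hΛ0 s hsΛ
        omega
    · obtain ⟨a, haW, rfl⟩ := hvΛ
      refine ⟨a, ?_⟩
      intro s hsS hsa
      have hs02 : heightVx G s = 0 ∨ heightVx G s = 2 := by
        have := hadj2 hsa
        have := haW.1
        have := hle3 s
        omega
      rcases hsS with (hs1 | hsY) | hsΛ
      · have : heightVx G s = 1 := hs1
        omega
      · exact absurd hsa (haW.2 s hsY)
      · obtain ⟨a', ha'W, rfl⟩ := hsΛ
        have haa : a = a' :=
          hleafnbr (F a') a' (hF a' ha'W.1).2 (hF a' ha'W.1).1.symm a hsa.symm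
        exact (congrArg F haa).symm
  have hS_min : IsMinTDSet G S := by
    refine ⟨hS_TD, ?_⟩
    intro S' hss hTD'
    obtain ⟨v, hvS, hvnS'⟩ := Set.exists_of_ssubset hss
    obtain ⟨x, hx⟩ := hS_key v hvS
    obtain ⟨s, hsS', hsx⟩ := isTDSet_iff.mp hTD' x
    have : s = v := hx s (hss.subset hsS') hsx
    exact hvnS' (this ▸ hsS')
  -- a₁ and a₂ are uncovered
  have ha₁W : a₁ ∈ W := by
    refine ⟨ha₁1, fun y hyY hadj => ?_⟩
    exact (hRa y (hY₀Cov.1 hyY)).1 hadj.symm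
  have ha₂W : a₂ ∈ W := by
    refine ⟨ha₂1, fun y hyY hadj => ?_⟩
    exact (hRa y (hY₀Cov.1 hyY)).2 hadj.symm
  have hl₁S : F a₁ ∈ S := Or.inr ⟨a₁, ha₁W, rfl⟩
  have hl₂S : F a₂ ∈ S := Or.inr ⟨a₂, ha₂W, rfl⟩
  have hl12 : F a₁ ≠ F a₂ := by
    intro he
    have hadja₂ : G.Adj a₂ (F a₁) := by
      rw [he]
      exact (hF a₂ ha₂1).1
    have h1 : a₂ = a₁ :=
      hleafnbr (F a₁) a₁ (hF a₁ ha₁1).2 (hF a₁ ha₁1).1.symm a₂ hadja₂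
    exact ha12 h1.symm
  have hb₁S : b₁ ∉ S := by
    intro hb
    rcases hb with (h1 | hY) | hΛ
    · have : heightVx G b₁ = 1 := h1
      omega
    · exact (hRa b₁ (hY₀Cov.1 hY)).1 hba₁.symm
    · have := hΛ0 b₁ hΛ
      omega
  -- the smaller TD-set
  set S2 : Set V := insert b₁ (S \ {F a₁, F a₂}) with hS2def
  have hS2_TD : IsTDSet G S2 := by
    rw [isTDSet_iff]
    intro x
    obtain ⟨s, hsS, hsx⟩ := isTDSet_iff.mp hS_TD x
    by_cases h1 : s = F a₁
    · have hxa : x = a₁ := by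
        refine hleafnbr (F a₁) a₁ (hF a₁ ha₁1).2 (hF a₁ ha₁1).1.symm x ?_
        rw [← h1]
        exact hsx.symm
      exact ⟨b₁, Set.mem_insert _ _, by rw [hxa]; exact hba₁⟩
    · by_cases h2 : s = F a₂
      · have hxa : x = a₂ := by
          refine hleafnbr (F a₂) a₂ (hF a₂ ha₂1).2 (hF a₂ ha₂1).1.symm x ?_
          rw [← h2]
          exact hsx.symm
        exact ⟨b₁, Set.mem_insert _ _, by rw [hxa]; exact hba₂⟩
      · refine ⟨s, Set.mem_insert_of_mem _ ⟨hsS, ?_⟩, hsx⟩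
        simp only [Set.mem_insert_iff, Set.mem_singleton_iff]
        push_neg
        exact ⟨h1, h2⟩
  -- cardinality comparison
  have hpairsub : ({F a₁, F a₂} : Set V) ⊆ S := by
    rw [Set.insert_subset_iff, Set.singleton_subset_iff]
    exact ⟨hl₁S, hl₂S⟩
  have hcd : (S \ {F a₁, F a₂}).ncard = S.ncard - 2 := by
    rw [Set.ncard_diff hpairsub (Set.toFinite _), Set.ncard_pair hl12]
  have hb₁nd : b₁ ∉ S \ {F a₁, F a₂} := fun h => hb₁S h.1
  have hS2card : S2.ncard = S.ncard - 2 + 1 := by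
    rw [hS2def, Set.ncard_insert_of_notMem hb₁nd (Set.toFinite _), hcd]
  have hge2 : 2 ≤ S.ncard := by
    have h := Set.ncard_le_ncard hpairsub (Set.toFinite S)
    rwa [Set.ncard_pair hl12] at h
  obtain ⟨M, hMS2, hMmin⟩ := exists_min_td_subset S2.ncard S2 le_rfl hS2_TD
  have hunm1 := hunm S M hS_min hMmin
  have hMle : M.ncard ≤ S2.ncard := Set.ncard_le_ncard hMS2 (Set.toFinite _)
  omega

end Main
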